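/- arXiv:0906.4883 — 4 statements merged into one kernel-verified Lean document; each statement's English description precedes it below -/
import Mathlib

section
/- Let 1 ≤ p < ∞. A subset F of ℓ^p is totally bounded if and only if (i) F is pointwise bounded (for each coordinate k, the set {x_k : x ∈ F} is bounded), and (ii) for every ε > 0 there exists n such that for every x ∈ F, ∑_{k>n} |x_k|^p < ε^p. -/
open scoped ENNReal

section Aux

variable (p : ℝ≥0∞) [hp : Fact (1 ≤ p)]

private lemma aux_single_add (i : ℕ) (a b : ℝ) :
    (lp.single p i (a + b) : lp (fun _ : ℕ => ℝ) p) = lp.single p i a + lp.single p i b := by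
  apply lp.ext
  funext j
  simp only [lp.coeFn_add, Pi.add_apply]
  by_cases h : j = i
  · subst h; simp [lp.single_apply_self]
  · simp [lp.single_apply_ne p i _ h]

/-- The truncation to the first `n+1` coordinates, as a linear map from `Fin (n+1) → ℝ`. -/
private noncomputable def Lmap (n : ℕ) : (Fin (n + 1) → ℝ) →ₗ[ℝ] lp (fun _ : ℕ => ℝ) p where
  toFun v := ∑ k : Fin (n + 1), (lp.single p (k : ℕ) (v k) : lp (fun _ : ℕ => ℝ) p)
  map_add' v w := by
    simp only [Pi.add_apply, aux_single_add p, Finset.sum_add_distrib]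
  map_smul' c v := by
    simp only [RingHom.id_apply, Pi.smul_apply, lp.single_smul, Finset.smul_sum]

private lemma Lmap_eq (n : ℕ) (f : lp (fun _ : ℕ => ℝ) p) :
    Lmap p n (fun k : Fin (n + 1) => (f : ℕ → ℝ) k) =
      ∑ i ∈ Finset.range (n + 1), lp.single p i ((f : ℕ → ℝ) i) := by
  rw [Finset.sum_range fun i => (lp.single p i ((f : ℕ → ℝ) i) : lp (fun _ : ℕ => ℝ) p)]
  rfl

private lemma q_pos (hp' : p ≠ ∞) : 0 < p.toReal :=
  ENNReal.toReal_pos (zero_lt_one.trans_le hp.out).ne' hp'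

/-- The tail sum equals the norm of the truncation remainder, to the `q`-th power. -/
private lemma tail_eq (hp' : p ≠ ∞) (n : ℕ) (f : lp (fun _ : ℕ => ℝ) p) :
    ∑' k : {k : ℕ // n < k}, |(f : ℕ → ℝ) (k : ℕ)| ^ p.toReal =
      ‖f - ∑ i ∈ Finset.range (n + 1), lp.single p i ((f : ℕ → ℝ) i)‖ ^ p.toReal := by
  have hq0 := q_pos p hp'
  have hs : Summable fun k : ℕ => ‖(f : ℕ → ℝ) k‖ ^ p.toReal :=
    (lp.hasSum_norm hq0 f).summable
  have h1 := Summable.sum_add_tsum_subtype_compl hs (Finset.range (n + 1))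
  have htot := (lp.hasSum_norm hq0 f).tsum_eq
  have he : ∑' k : {k : ℕ // n < k}, |(f : ℕ → ℝ) (k : ℕ)| ^ p.toReal =
      ∑' k : {k : ℕ // k ∉ Finset.range (n + 1)}, ‖(f : ℕ → ℝ) (k : ℕ)‖ ^ p.toReal := by
    have hiff : ∀ k : ℕ, n < k ↔ k ∉ Finset.range (n + 1) := by
      intro k; simp [Nat.lt_succ_iff]
    rw [← Equiv.tsum_eq (Equiv.subtypeEquivRight hiff)
      (fun k : {k : ℕ // k ∉ Finset.range (n + 1)} => ‖(f : ℕ → ℝ) (k : ℕ)‖ ^ p.toReal)]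
    exact tsum_congr fun k => by simp [Real.norm_eq_abs, Equiv.subtypeEquivRight]; rfl
  rw [he, lp.norm_compl_sum_single hq0 f (Finset.range (n + 1))]
  linarith [h1, htot]

private lemma trunc_norm_le (hp' : p ≠ ∞) (n : ℕ) (f : lp (fun _ : ℕ => ℝ) p) :
    ‖f - ∑ i ∈ Finset.range (n + 1), lp.single p i ((f : ℕ → ℝ) i)‖ ≤ ‖f‖ := by
  have hq0 := q_pos p hp'
  rw [← Real.rpow_le_rpow_iff (norm_nonneg _) (norm_nonneg _) hq0,
    lp.norm_compl_sum_single hq0 f (Finset.range (n + 1))]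
  have : 0 ≤ ∑ i ∈ Finset.range (n + 1), ‖(f : ℕ → ℝ) i‖ ^ p.toReal :=
    Finset.sum_nonneg fun i _ => Real.rpow_nonneg (norm_nonneg _) _
  linarith

end Aux

theorem frechet_lp_compactness (p : ℝ≥0∞) [hp : Fact (1 ≤ p)] (hp' : p ≠ ∞)
    (F : Set (lp (fun _ : ℕ => ℝ) p)) :
    TotallyBounded F ↔
      ((∀ k : ℕ, ∃ M : ℝ, ∀ x ∈ F, |(x : ℕ → ℝ) k| ≤ M) ∧
       (∀ ε > (0 : ℝ), ∃ n : ℕ, ∀ x ∈ F,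
         ∑' k : {k : ℕ // n < k}, |(x : ℕ → ℝ) (k : ℕ)| ^ p.toReal < ε ^ p.toReal)) := by
  have hq0 := q_pos p hp'
  have hpne : p ≠ 0 := (zero_lt_one.trans_le hp.out).ne'
  set T : ℕ → lp (fun _ : ℕ => ℝ) p → lp (fun _ : ℕ => ℝ) p :=
    fun n f => ∑ i ∈ Finset.range (n + 1), lp.single p i ((f : ℕ → ℝ) i) with hT
  have hTL : ∀ (n : ℕ) (f : lp (fun _ : ℕ => ℝ) p),
      T n f = Lmap p n (fun k : Fin (n + 1) => (f : ℕ → ℝ) k) :=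
    fun n f => (Lmap_eq p n f).symm
  have hTsub : ∀ (n : ℕ) (x y : lp (fun _ : ℕ => ℝ) p), T n (x - y) = T n x - T n y := by
    intro n x y
    rw [hTL, hTL, hTL, ← map_sub]
    congr 1
  constructor
  · intro hTB
    constructor
    · -- pointwise bounded
      intro k
      obtain ⟨C, hC⟩ := (hTB.isBounded).subset_closedBall 0
      refine ⟨C, fun x hx => ?_⟩
      have h1 : ‖x‖ ≤ C := by
        have := hC hx
        rwa [Metric.mem_closedBall, dist_zero_right] at this
      calc |(x : ℕ → ℝ) k| = ‖(x : ℕ → ℝ) k‖ := (Real.norm_eq_abs _).symm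
        _ ≤ ‖x‖ := lp.norm_apply_le_norm hpne x k
        _ ≤ C := h1
    · -- uniform tails
      intro ε hε
      obtain ⟨t, htfin, hcov⟩ := Metric.totallyBounded_iff.mp hTB (ε / 2) (half_pos hε)
      -- for each y ∈ t, the tail of y goes to 0
      have key : ∀ y : lp (fun _ : ℕ => ℝ) p, ∃ N : ℕ, ∀ n ≥ N,
          ‖y - T n y‖ < ε / 2 := by
        intro y
        have hsum := lp.hasSum_norm hq0 y
        have htend : Filter.Tendsto
            (fun n : ℕ => ∑ i ∈ Finset.range (n + 1), ‖(y : ℕ → ℝ) i‖ ^ p.toReal)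
            Filter.atTop (nhds (‖y‖ ^ p.toReal)) := by
          have := hsum.tendsto_sum_nat
          exact this.comp (Filter.tendsto_add_atTop_nat 1)
        have hlt : ∀ᶠ n : ℕ in Filter.atTop,
            ‖y‖ ^ p.toReal - (ε / 2) ^ p.toReal <
              ∑ i ∈ Finset.range (n + 1), ‖(y : ℕ → ℝ) i‖ ^ p.toReal := by
          apply htend.eventually_const_lt
          have : (0 : ℝ) < (ε / 2) ^ p.toReal := Real.rpow_pos_of_pos (half_pos hε) _
          linarith
        obtain ⟨N, hN⟩ := hlt.exists_forall_of_atTop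
        refine ⟨N, fun n hn => ?_⟩
        rw [← Real.rpow_lt_rpow_iff (norm_nonneg _) (le_of_lt (half_pos hε)) hq0]
        have h2 := lp.norm_compl_sum_single hq0 y (Finset.range (n + 1))
        rw [hT]
        rw [h2]
        have := hN n hn
        linarith
      choose N hN using key
      by_cases hte : t.Nonempty
      · refine ⟨htfin.toFinset.sup N, fun x hx => ?_⟩
        obtain ⟨y, hyt, hxy⟩ := Set.mem_iUnion₂.mp (hcov hx)
        have hxy' : ‖x - y‖ < ε / 2 := by
          rwa [Metric.mem_ball, dist_eq_norm] at hxy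
        set n := htfin.toFinset.sup N with hn
        have hyn : ‖y - T n y‖ < ε / 2 :=
          hN y n (Finset.le_sup (htfin.mem_toFinset.mpr hyt))
        have hdecomp : x - T n x = (x - y - T n (x - y)) + (y - T n y) := by
          rw [hTsub]; abel
        have hle : ‖x - T n x‖ < ε := by
          calc ‖x - T n x‖ ≤ ‖x - y - T n (x - y)‖ + ‖y - T n y‖ := by
                rw [hdecomp]; exact norm_add_le _ _
            _ ≤ ‖x - y‖ + ‖y - T n y‖ := by
                have h3 : ‖x - y - T n (x - y)‖ ≤ ‖x - y‖ := trunc_norm_le p hp' n (x - y)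
                linarith
            _ < ε / 2 + ε / 2 := by exact add_lt_add hxy' hyn
            _ = ε := add_halves ε
        rw [tail_eq p hp' n x]
        exact Real.rpow_lt_rpow (norm_nonneg _) hle hq0
      · -- t empty means F empty
        refine ⟨0, fun x hx => ?_⟩
        exfalso
        rcases Set.mem_iUnion₂.mp (hcov hx) with ⟨y, hyt, _⟩
        exact hte ⟨y, hyt⟩
  · rintro ⟨hb, htail⟩
    rw [Metric.totallyBounded_iff]
    intro ε hε
    obtain ⟨n, hn⟩ := htail (ε / 2) (half_pos hε)
    -- truncation remainder is small on F
    have hrem : ∀ x ∈ F, ‖x - T n x‖ < ε / 2 := by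
      intro x hx
      rw [← Real.rpow_lt_rpow_iff (norm_nonneg _) (le_of_lt (half_pos hε)) hq0]
      have := hn x hx
      rwa [tail_eq p hp' n x] at this
    choose M hM using hb
    set R : ℝ := ∑ i ∈ Finset.range (n + 1), |M i| with hR
    have hR0 : 0 ≤ R := Finset.sum_nonneg fun i _ => abs_nonneg _
    have hK : IsCompact (Metric.closedBall (0 : Fin (n + 1) → ℝ) R) :=
      isCompact_closedBall _ _
    have hLcont : Continuous (Lmap p n) := (Lmap p n).continuous_of_finiteDimensional
    have hC : IsCompact ((Lmap p n) '' Metric.closedBall (0 : Fin (n + 1) → ℝ) R) :=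
      hK.image hLcont
    obtain ⟨t, htfin, hcov⟩ :=
      Metric.totallyBounded_iff.mp hC.totallyBounded (ε / 2) (half_pos hε)
    refine ⟨t, htfin, fun x hx => ?_⟩
    have hmem : T n x ∈ (Lmap p n) '' Metric.closedBall (0 : Fin (n + 1) → ℝ) R := by
      refine ⟨fun k : Fin (n + 1) => (x : ℕ → ℝ) k, ?_, (hTL n x).symm⟩
      rw [Metric.mem_closedBall, dist_zero_right]
      rw [pi_norm_le_iff_of_nonneg hR0]
      intro k
      calc ‖(x : ℕ → ℝ) (k : ℕ)‖ = |(x : ℕ → ℝ) (k : ℕ)| := Real.norm_eq_abs _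
        _ ≤ M (k : ℕ) := hM (k : ℕ) x hx
        _ ≤ |M (k : ℕ)| := le_abs_self _
        _ ≤ R := Finset.single_le_sum (fun i _ => abs_nonneg (M i))
            (Finset.mem_range.mpr k.isLt)
    obtain ⟨y, hyt, hy⟩ := Set.mem_iUnion₂.mp (hcov hmem)
    refine Set.mem_iUnion₂.mpr ⟨y, hyt, ?_⟩
    rw [Metric.mem_ball] at hy ⊢
    calc dist x y ≤ dist x (T n x) + dist (T n x) y := dist_triangle _ _ _
      _ < ε / 2 + ε / 2 := by
          refine add_lt_add ?_ hy
          rw [dist_eq_norm]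
          exact hrem x hx
      _ = ε := add_halves ε
end

section
/- Let 1 ≤ p < ∞ and let F be a totally bounded subset of L^p(ℝ^n). Then for every ε > 0 there exists ρ > 0 such that ∫_{ℝ^n} |f(x+y) − f(x)|^p dx < ε^p for every f ∈ F and every y ∈ ℝ^n with |y| < ρ (uniform L^p-equicontinuity of translations). -/
open MeasureTheory
open scoped ENNReal

set_option maxHeartbeats 1000000 in
theorem totallyBounded_uniform_translation (n : ℕ) (p : ℝ≥0∞) [Fact (1 ≤ p)] (hp' : p ≠ ∞)
    (F : Set (Lp ℝ p (volume : Measure (EuclideanSpace ℝ (Fin n)))))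
    (hF : TotallyBounded F) :
    ∀ ε > (0 : ℝ), ∃ ρ > (0 : ℝ), ∀ f ∈ F, ∀ y : EuclideanSpace ℝ (Fin n), ‖y‖ < ρ →
      ∫ x : EuclideanSpace ℝ (Fin n), |f (x + y) - f x| ^ p.toReal < ε ^ p.toReal := by
  have hp1 : (1 : ℝ≥0∞) ≤ p := Fact.out
  have hp0 : p ≠ 0 := fun h => by simp [h] at hp1
  have hq : 0 < p.toReal := ENNReal.toReal_pos hp0 hp'
  set X := EuclideanSpace ℝ (Fin n) with hXdef
  -- translation maps as continuous maps
  set Acm : ContinuousMap (X × X) X := ⟨fun a => a.2 + a.1, by fun_prop⟩ with hAcm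
  set A : X → ContinuousMap X X := fun y => Acm.curry y with hA
  have hAapp : ∀ (y x : X), A y x = x + y := fun y x => rfl
  have hAmp : ∀ y : X, MeasurePreserving (A y) volume volume := fun y => by
    have : ⇑(A y) = fun x => x + y := funext fun x => hAapp y x
    rw [this]
    exact measurePreserving_add_right volume y
  -- the translation operator on Lp
  set Φ : X → Lp ℝ p (volume : Measure X) → Lp ℝ p (volume : Measure X) :=
    fun y f => Lp.compMeasurePreserving (A y) (hAmp y) f with hΦ
  have hΦcont : Continuous fun z : X × Lp ℝ p (volume : Measure X) => Φ z.1 z.2 :=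
    Continuous.compMeasurePreservingLp continuous_snd
      (Acm.curry.continuous.comp continuous_fst) (fun z => hAmp z.1) hp'
  have hΦcoe : ∀ (y : X) (f : Lp ℝ p (volume : Measure X)),
      ⇑(Φ y f) =ᵐ[volume] fun x => f (x + y) := fun y f => by
    filter_upwards [Lp.coeFn_compMeasurePreserving f (hAmp y)] with x hx
    rw [hx, Function.comp_apply, hAapp]
  have hΦ0 : ∀ f : Lp ℝ p (volume : Measure X), Φ 0 f = f := by
    intro f
    refine Lp.ext ((hΦcoe 0 f).trans ?_)
    filter_upwards with x
    simp
  -- the key continuous functional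
  have hΨcont : Continuous fun z : X × Lp ℝ p (volume : Measure X) => ‖Φ z.1 z.2 - z.2‖ :=
    (hΦcont.sub continuous_snd).norm
  intro ε hε
  -- tube lemma around {0} × closure F
  have hK : IsCompact (closure F) :=
    TotallyBounded.isCompact_of_isClosed hF.closure isClosed_closure
  have hopen : IsOpen ((fun z : X × Lp ℝ p (volume : Measure X) => ‖Φ z.1 z.2 - z.2‖) ⁻¹'
      Set.Iio ε) := isOpen_Iio.preimage hΨcont
  have hsub : ({0} : Set X) ×ˢ closure F ⊆
      (fun z : X × Lp ℝ p (volume : Measure X) => ‖Φ z.1 z.2 - z.2‖) ⁻¹' Set.Iio ε := by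
    rintro ⟨y, f⟩ ⟨hy, -⟩
    simp only [Set.mem_singleton_iff] at hy
    subst hy
    simp [hΦ0 f, hε]
  obtain ⟨U, V, hU, -, h0U, hFV, hUV⟩ :=
    generalized_tube_lemma isCompact_singleton hK hopen hsub
  rw [Metric.isOpen_iff] at hU
  obtain ⟨ρ, hρ, hball⟩ := hU 0 (h0U rfl)
  refine ⟨ρ, hρ, fun f hf y hy => ?_⟩
  have hyU : y ∈ U := hball (by simpa [Metric.mem_ball, dist_eq_norm] using hy)
  have hyV : f ∈ V := hFV (subset_closure hf)
  have hmem2 : ((y, f) : X × Lp ℝ p (volume : Measure X)) ∈ U ×ˢ V := ⟨hyU, hyV⟩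
  have hΨlt := hUV hmem2
  simp only [Set.mem_preimage, Set.mem_Iio] at hΨlt
  -- convert the norm bound to the integral bound
  set g : Lp ℝ p (volume : Measure X) := Φ y f - f with hg
  have hmem : MemLp (⇑g) p (volume : Measure X) := Lp.memLp g
  have hnorm : ‖g‖ = (∫ a, ‖g a‖ ^ p.toReal ∂(volume : Measure X)) ^ p.toReal⁻¹ := by
    rw [Lp.norm_def, hmem.eLpNorm_eq_integral_rpow_norm hp0 hp', ENNReal.toReal_ofReal]
    positivity
  have hintnn : 0 ≤ ∫ a, ‖g a‖ ^ p.toReal ∂(volume : Measure X) :=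
    integral_nonneg fun a => Real.rpow_nonneg (norm_nonneg _) _
  have hint : ∫ a, ‖g a‖ ^ p.toReal ∂(volume : Measure X) = ‖g‖ ^ p.toReal := by
    rw [hnorm, Real.rpow_inv_rpow hintnn hq.ne']
  have hcongr : ∫ x, |f (x + y) - f x| ^ p.toReal ∂(volume : Measure X)
      = ∫ a, ‖g a‖ ^ p.toReal ∂(volume : Measure X) := by
    refine integral_congr_ae ?_
    filter_upwards [hΦcoe y f, Lp.coeFn_sub (Φ y f) f] with x h1 h2
    rw [h2]
    simp [h1, Real.norm_eq_abs]
  rw [hcongr, hint]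
  exact Real.rpow_lt_rpow (norm_nonneg _) hΨlt hq
end

section
/- Let 1 ≤ p < ∞, let Q be an open cube centered at the origin, and let Q_1,…,Q_N be non-overlapping translates of Q. Let P be the operator replacing f on each Q_i by its average over Q_i and by 0 elsewhere. Then for every f ∈ L^p(ℝ^n), ∑_{i=1}^N ∫_{Q_i} |f(x) − Pf(x)|^p dx ≤ (1/|Q|) ∫_{2Q} ∫_{ℝ^n} |f(x) − f(x+y)|^p dx dy, where 2Q is the cube with twice the side length of Q centered at the origin. -/
open MeasureTheory ENNReal

section Aux

variable {n : ℕ}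

private lemma measApply (j : Fin n) : Measurable fun x : EuclideanSpace ℝ (Fin n) => x j :=
  (measurable_pi_apply j).comp (MeasurableEquiv.toLp 2 (Fin n → ℝ)).symm.measurable

private lemma measCube (h : ℝ) (c : EuclideanSpace ℝ (Fin n)) :
    MeasurableSet {x : EuclideanSpace ℝ (Fin n) | ∀ j, |x j - c j| < h} := by
  rw [Set.setOf_forall]
  exact MeasurableSet.iInter fun j =>
    measurableSet_lt (((measApply j).sub measurable_const).abs) measurable_const

private lemma measCube0 (h : ℝ) :
    MeasurableSet {x : EuclideanSpace ℝ (Fin n) | ∀ j, |x j| < h} := by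
  have : {x : EuclideanSpace ℝ (Fin n) | ∀ j, |x j| < h}
      = {x : EuclideanSpace ℝ (Fin n) | ∀ j, |x j - (0 : EuclideanSpace ℝ (Fin n)) j| < h} := by
    simp
  rw [this]; exact measCube h 0

private lemma volCube (h : ℝ) :
    volume {x : EuclideanSpace ℝ (Fin n) | ∀ j, |x j| < h} = ENNReal.ofReal (2*h) ^ n := by
  have hmp := (EuclideanSpace.volume_preserving_symm_measurableEquiv_toLp (Fin n)).symm
  rw [← hmp.measure_preimage]
  · have he : (MeasurableEquiv.toLp 2 (Fin n → ℝ)).symm.symm ⁻¹'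
        {x : EuclideanSpace ℝ (Fin n) | ∀ j, |x j| < h}
        = Set.pi Set.univ (fun _ : Fin n => Set.Ioo (-h) h) := by
      ext x
      simp only [Set.mem_preimage, Set.mem_setOf_eq, Set.mem_pi, Set.mem_univ, Set.mem_Ioo,
        forall_true_left, abs_lt]
      rfl
    rw [he, volume_pi_pi]
    simp [Real.volume_Ioo, two_mul]
  · exact (measCube0 h).nullMeasurableSet

private lemma algebra_lemma {p : ℝ} (hp : 1 ≤ p) (V I : ℝ≥0∞) (hV0 : V ≠ 0) (hVt : V ≠ ⊤) :
    (V⁻¹ * (I ^ (1/p) * V ^ (1 - 1/p))) ^ p = V⁻¹ * I := by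
  have hp0 : (0:ℝ) < p := lt_of_lt_of_le one_pos hp
  have he : (1 - 1/p) * p = p + (-1) := by field_simp; ring
  have hVp0 : V ^ p ≠ 0 := (ENNReal.rpow_pos (pos_iff_ne_zero.2 hV0) hVt).ne'
  have hVpt : V ^ p ≠ ⊤ := ENNReal.rpow_ne_top_of_nonneg hp0.le hVt
  rw [ENNReal.mul_rpow_of_nonneg _ _ hp0.le, ENNReal.mul_rpow_of_nonneg _ _ hp0.le,
    ← ENNReal.rpow_mul I, one_div_mul_cancel hp0.ne', ENNReal.rpow_one,
    ← ENNReal.rpow_mul V, he, ENNReal.rpow_add p (-1) hV0 hVt,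
    ENNReal.inv_rpow, ENNReal.rpow_neg_one]
  calc (V ^ p)⁻¹ * (I * (V ^ p * V⁻¹)) = ((V ^ p)⁻¹ * V ^ p) * V⁻¹ * I := by ring
    _ = V⁻¹ * I := by rw [ENNReal.inv_mul_cancel hVp0 hVpt, one_mul]

private lemma ofReal_abs_rpow {p a : ℝ} (hp0 : 0 < p) :
    ENNReal.ofReal (|a| ^ p) = (‖a‖₊ : ℝ≥0∞) ^ p := by
  rw [← Real.norm_eq_abs, ← enorm_eq_nnnorm, ← ofReal_norm, ← ENNReal.ofReal_rpow_of_nonneg (norm_nonneg a) hp0.le]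

theorem aux_estimate (n N : ℕ) (p : ℝ) (hp : 1 ≤ p)
    (h : ℝ) (hh : 0 < h)
    (c : Fin N → EuclideanSpace ℝ (Fin n))
    (Q : Fin N → Set (EuclideanSpace ℝ (Fin n)))
    (hQ : ∀ i, Q i = {x | ∀ j, |x j - c i j| < h})
    (hdisj : Pairwise (Function.onFun Disjoint Q))
    (Q0 Q2 : Set (EuclideanSpace ℝ (Fin n)))
    (hQ0 : Q0 = {x | ∀ j, |x j| < h})
    (hQ2 : Q2 = {x | ∀ j, |x j| < 2 * h})
    (P : (EuclideanSpace ℝ (Fin n) → ℝ) → (EuclideanSpace ℝ (Fin n) → ℝ))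
    (hP : ∀ g x, P g x = ∑ i : Fin N,
      Set.indicator (Q i) (fun _ => (volume (Q i)).toReal⁻¹ * ∫ z in Q i, g z) x)
    (f : EuclideanSpace ℝ (Fin n) → ℝ) (hf : MemLp f (ENNReal.ofReal p) volume)
    (hfm : Measurable f) :
    ∑ i : Fin N, ∫ x in Q i, |f x - P f x| ^ p ≤
      (volume Q0).toReal⁻¹ * ∫ y in Q2, ∫ x : EuclideanSpace ℝ (Fin n), |f x - f (x + y)| ^ p := by
  classical
  have hp0 : (0:ℝ) < p := lt_of_lt_of_le one_pos hp
  set P' : ℝ≥0∞ := ENNReal.ofReal p with hP'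
  have hP1 : (1:ℝ≥0∞) ≤ P' := by
    rw [hP', ← ENNReal.ofReal_one]; exact ENNReal.ofReal_le_ofReal hp
  have hP0 : P' ≠ 0 := by
    simp only [hP', ne_eq, ENNReal.ofReal_eq_zero, not_le]; exact hp0
  have hPt : P' ≠ ⊤ := ENNReal.ofReal_ne_top
  have hPr : P'.toReal = p := ENNReal.toReal_ofReal hp0.le
  have hQm : ∀ i, MeasurableSet (Q i) := fun i => by rw [hQ i]; exact measCube h (c i)
  have hQ2m : MeasurableSet Q2 := by rw [hQ2]; exact measCube0 (2*h)
  set V : ℝ≥0∞ := volume Q0 with hV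
  have hv0 : V = ENNReal.ofReal (2*h) ^ n := by rw [hV, hQ0]; exact volCube h
  have hV0 : V ≠ 0 := by
    rw [hv0]
    refine pow_ne_zero _ ?_
    simp only [ne_eq, ENNReal.ofReal_eq_zero, not_le]
    linarith
  have hVt : V ≠ ⊤ := by rw [hv0]; exact pow_ne_top ENNReal.ofReal_ne_top
  have hVr0 : (0:ℝ) < V.toReal := ENNReal.toReal_pos hV0 hVt
  have hv2t : volume Q2 ≠ ⊤ := by
    rw [hQ2, volCube (2*h)]; exact pow_ne_top ENNReal.ofReal_ne_top
  have hvQ : ∀ i, volume (Q i) = V := by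
    intro i
    have hpre : Q i = (fun x : EuclideanSpace ℝ (Fin n) => x + (-(c i))) ⁻¹' Q0 := by
      rw [hQ i, hQ0]
      ext x
      have key : ∀ j, (x + -(c i)) j = x j - c i j := fun j => by
        simp [sub_eq_add_neg]
      simp only [Set.mem_preimage, Set.mem_setOf_eq, key]
    rw [hpre, measure_preimage_add_right]
  set G : EuclideanSpace ℝ (Fin n) → EuclideanSpace ℝ (Fin n) → ℝ≥0∞ := fun x y => (‖f x - f (x + y)‖₊ : ℝ≥0∞) ^ p with hG
  have hGm : Measurable fun q : EuclideanSpace ℝ (Fin n) × EuclideanSpace ℝ (Fin n) => G q.1 q.2 := by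
    refine Measurable.pow_const (Measurable.coe_nnreal_ennreal ?_) _
    exact ((hfm.comp measurable_fst).sub (hfm.comp measurable_add)).nnnorm
  set K : EuclideanSpace ℝ (Fin n) → ℝ≥0∞ := fun x => ∫⁻ y in Q2, G x y with hK
  set D : ℝ≥0∞ := ∫⁻ y in Q2, ∫⁻ x, G x y with hD
  set Pavg : Fin N → ℝ := fun i => (volume (Q i)).toReal⁻¹ * ∫ z in Q i, f z with hPavg
  set L : Fin N → ℝ≥0∞ := fun i => ∫⁻ x in Q i, (‖f x - Pavg i‖₊ : ℝ≥0∞) ^ p with hL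
  have hasm : AEStronglyMeasurable f (volume : Measure (EuclideanSpace ℝ (Fin n))) := hfm.aestronglyMeasurable
  have hsnorm : eLpNorm f P' volume ≠ ⊤ := hf.2.ne
  -- uniform bound on inner lintegral
  have hbd : ∀ y : EuclideanSpace ℝ (Fin n), (∫⁻ x, G x y) ≤ (2 * eLpNorm f P' volume) ^ p := by
    intro y
    have hmp : MeasurePreserving (fun x : EuclideanSpace ℝ (Fin n) => x + y) volume volume :=
      measurePreserving_add_right volume y
    have htr : eLpNorm (fun x : EuclideanSpace ℝ (Fin n) => f (x + y)) P' volume = eLpNorm f P' volume :=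
      eLpNorm_comp_measurePreserving hasm hmp
    have h1 : (∫⁻ x, G x y) = (eLpNorm (fun x : EuclideanSpace ℝ (Fin n) => f x - f (x + y)) P' volume) ^ p := by
      rw [eLpNorm_eq_lintegral_rpow_enorm_toReal hP0 hPt]; simp only [enorm_eq_nnnorm]; rw [hPr, ← ENNReal.rpow_mul,
        one_div_mul_cancel hp0.ne', ENNReal.rpow_one]
    rw [h1]
    refine ENNReal.rpow_le_rpow ?_ hp0.le
    calc eLpNorm (fun x : EuclideanSpace ℝ (Fin n) => f x - f (x + y)) P' volume
        ≤ eLpNorm f P' volume + eLpNorm (fun x : EuclideanSpace ℝ (Fin n) => f (x + y)) P' volume :=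
          eLpNorm_sub_le hasm (hasm.comp_measurePreserving hmp) hP1
      _ = 2 * eLpNorm f P' volume := by rw [htr, two_mul]
  have hDt : D ≠ ⊤ := by
    have hle : D ≤ (2 * eLpNorm f P' volume) ^ p * volume Q2 := by
      calc D ≤ ∫⁻ _ in Q2, (2 * eLpNorm f P' volume) ^ p :=
            lintegral_mono fun y => hbd y
        _ = (2 * eLpNorm f P' volume) ^ p * volume Q2 := by rw [setLIntegral_const]
    exact ne_top_of_le_ne_top
      (ENNReal.mul_ne_top
        (ENNReal.rpow_ne_top_of_nonneg hp0.le
          (ENNReal.mul_ne_top (by simp) hsnorm)) hv2t) hle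
  -- swap of integrals
  have hswap : (∫⁻ x, K x) = D := by
    simp only [hK, hD]
    exact lintegral_lintegral_swap hGm.aemeasurable
  -- sum over disjoint cubes
  have hsum : ∑ i, ∫⁻ x in Q i, K x ≤ D := by
    have hUn : (∫⁻ x in ⋃ i, Q i, K x) = ∑ i, ∫⁻ x in Q i, K x := by
      rw [lintegral_iUnion hQm hdisj, tsum_fintype]
    rw [← hUn, ← hswap]
    exact setLIntegral_le_lintegral _ _
  -- key pointwise/cube estimate
  have hkey : ∀ i, L i ≤ V⁻¹ * ∫⁻ x in Q i, K x := by
    intro i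
    haveI hfin : IsFiniteMeasure (volume.restrict (Q i)) := by
      constructor
      rw [Measure.restrict_apply_univ, hvQ i]
      exact hVt.lt_top
    have hfi : Integrable f (volume.restrict (Q i)) := (hf.restrict (Q i)).integrable hP1
    have hpt : ∀ x ∈ Q i, ((‖f x - Pavg i‖₊ : ℝ≥0∞)) ^ p ≤ V⁻¹ * K x := by
      intro x hx
      have ha : f x - Pavg i = V.toReal⁻¹ * ∫ z in Q i, (f x - f z) := by
        rw [integral_sub (integrable_const _) hfi, integral_const,
          measureReal_restrict_apply_univ, measureReal_def, hvQ i]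
        simp only [hPavg, hvQ i, smul_eq_mul]
        field_simp
      have hb : ((‖f x - Pavg i‖₊ : ℝ≥0∞)) ≤ V⁻¹ * ∫⁻ z in Q i, (‖f x - f z‖₊ : ℝ≥0∞) := by
        rw [ha, nnnorm_mul, ENNReal.coe_mul]
        have hVinv : ((‖V.toReal⁻¹‖₊ : ℝ≥0∞)) = V⁻¹ := by
          rw [← enorm_eq_nnnorm, ← ofReal_norm, Real.norm_eq_abs,
            abs_of_nonneg (inv_nonneg.2 ENNReal.toReal_nonneg),
            ENNReal.ofReal_inv_of_pos hVr0, ENNReal.ofReal_toReal hVt]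
        rw [hVinv]
        exact mul_le_mul_right (enorm_integral_le_lintegral_enorm _) _
      have hc : (∫⁻ z in Q i, (‖f x - f z‖₊ : ℝ≥0∞))
          ≤ (∫⁻ z in Q i, ((‖f x - f z‖₊ : ℝ≥0∞)) ^ p) ^ (1/p) * V ^ (1 - 1/p) := by
        have hle := eLpNorm_le_eLpNorm_mul_rpow_measure_univ (p := 1) (q := P') hP1
          (aestronglyMeasurable_const.sub (hasm.restrict) :
            AEStronglyMeasurable (fun z => f x - f z) (volume.restrict (Q i)))
        rw [eLpNorm_one_eq_lintegral_enorm, eLpNorm_eq_lintegral_rpow_enorm_toReal hP0 hPt, hPr,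
          Measure.restrict_apply_univ, hvQ i, ENNReal.toReal_one] at hle
        simp only [enorm_eq_nnnorm] at hle; simpa using hle
      have hd : (∫⁻ z in Q i, ((‖f x - f z‖₊ : ℝ≥0∞)) ^ p) ≤ K x := by
        have hmz : Measurable fun z : EuclideanSpace ℝ (Fin n) => ((‖f x - f z‖₊ : ℝ≥0∞)) ^ p :=
          ((measurable_const.sub hfm).nnnorm.coe_nnreal_ennreal).pow_const _
        have hmt : Measurable fun y : EuclideanSpace ℝ (Fin n) => x + y := measurable_const.add measurable_id
        have heq : (∫⁻ z in Q i, ((‖f x - f z‖₊ : ℝ≥0∞)) ^ p)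
            = ∫⁻ y in (fun y : EuclideanSpace ℝ (Fin n) => x + y) ⁻¹' Q i, ((‖f x - f (x + y)‖₊ : ℝ≥0∞)) ^ p := by
          conv_lhs => rw [← map_add_left_eq_self (volume : Measure (EuclideanSpace ℝ (Fin n))) x]
          rw [setLIntegral_map (hQm i) hmz hmt]
        rw [heq]
        simp only [hK, hG]
        refine lintegral_mono_set ?_
        intro y hy
        rw [Set.mem_preimage, hQ i] at hy
        rw [hQ i] at hx
        rw [hQ2]
        intro j
        have hxj : |x j - c i j| < h := hx j
        have hyj : |x j + y j - c i j| < h := hy j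
        have hey : y j = (x j + y j - c i j) - (x j - c i j) := by ring
        rw [hey]
        calc |(x j + y j - c i j) - (x j - c i j)|
            ≤ |x j + y j - c i j| + |x j - c i j| := abs_sub _ _
          _ < 2 * h := by linarith
      calc ((‖f x - Pavg i‖₊ : ℝ≥0∞)) ^ p
          ≤ (V⁻¹ * ((∫⁻ z in Q i, ((‖f x - f z‖₊ : ℝ≥0∞)) ^ p) ^ (1/p) * V ^ (1 - 1/p))) ^ p :=
            ENNReal.rpow_le_rpow (hb.trans (mul_le_mul_right hc _)) hp0.le
        _ = V⁻¹ * ∫⁻ z in Q i, ((‖f x - f z‖₊ : ℝ≥0∞)) ^ p := algebra_lemma hp V _ hV0 hVt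
        _ ≤ V⁻¹ * K x := mul_le_mul_right hd _
    calc L i ≤ ∫⁻ x in Q i, V⁻¹ * K x := by
          refine lintegral_mono_ae ?_
          filter_upwards [ae_restrict_mem (hQm i)] with x hx
          exact hpt x hx
      _ = V⁻¹ * ∫⁻ x in Q i, K x := lintegral_const_mul' _ _ (ENNReal.inv_ne_top.2 hV0)
  have hLt : ∀ i, L i ≠ ⊤ := by
    intro i
    refine ne_top_of_le_ne_top (ENNReal.mul_ne_top (ENNReal.inv_ne_top.2 hV0) hDt)
      ((hkey i).trans (mul_le_mul_right ?_ _))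
    calc (∫⁻ x in Q i, K x) ≤ ∫⁻ x, K x := setLIntegral_le_lintegral _ _
      _ = D := hswap
  have hmain : ∑ i, L i ≤ V⁻¹ * D := by
    calc ∑ i, L i ≤ ∑ i, V⁻¹ * ∫⁻ x in Q i, K x := Finset.sum_le_sum fun i _ => hkey i
      _ = V⁻¹ * ∑ i, ∫⁻ x in Q i, K x := by rw [Finset.mul_sum]
      _ ≤ V⁻¹ * D := mul_le_mul_right hsum _
  -- conversion of the left-hand side
  have hLHS : ∀ i, ∫ x in Q i, |f x - P f x| ^ p = (L i).toReal := by
    intro i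
    have h1 : ∫ x in Q i, |f x - P f x| ^ p = ∫ x in Q i, |f x - Pavg i| ^ p := by
      refine setIntegral_congr_fun (hQm i) fun x hx => ?_
      have hPx : P f x = Pavg i := by
        rw [hP f x, Finset.sum_eq_single i]
        · rw [Set.indicator_of_mem hx]
        · intro j _ hj
          exact Set.indicator_of_notMem
            (fun hxj => Set.disjoint_left.1 (hdisj hj) hxj hx) _
        · intro hi; exact absurd (Finset.mem_univ i) hi
      rw [hPx]
    rw [h1, integral_eq_lintegral_of_nonneg_ae (f := fun x => |f x - Pavg i| ^ p)
      (Filter.Eventually.of_forall fun x => Real.rpow_nonneg (abs_nonneg _) _)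
      (((hfm.sub measurable_const).abs.pow_const p).aestronglyMeasurable)]
    simp only [hL]
    congr 1
    exact lintegral_congr fun x => ofReal_abs_rpow hp0
  -- conversion of the right-hand side
  have hKm : Measurable fun y : EuclideanSpace ℝ (Fin n) => ∫⁻ x, G x y :=
    Measurable.lintegral_prod_left hGm
  have hRHS : (∫ y in Q2, ∫ x, |f x - f (x + y)| ^ p) = D.toReal := by
    have h1 : ∀ y : EuclideanSpace ℝ (Fin n), (∫ x, |f x - f (x + y)| ^ p) = (∫⁻ x, G x y).toReal := by
      intro y
      have hm2 : Measurable fun x : EuclideanSpace ℝ (Fin n) => f (x + y) :=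
        hfm.comp (measurable_add_const y)
      rw [integral_eq_lintegral_of_nonneg_ae (f := fun x => |f x - f (x + y)| ^ p)
        (Filter.Eventually.of_forall fun x => Real.rpow_nonneg (abs_nonneg _) _)
        (((hfm.sub hm2).abs.pow_const p).aestronglyMeasurable)]
      congr 1
      refine lintegral_congr fun x => ?_
      simp only [hG]
      exact ofReal_abs_rpow hp0
    have h2 : (∫ y in Q2, ((∫⁻ x, G x y)).toReal) = D.toReal := by
      simp only [hD]
      refine integral_toReal (hKm.aemeasurable.restrict) ?_
      exact ae_lt_top' (hKm.aemeasurable.restrict) (by rw [← hD] at *; exact hDt)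
    rw [← h2]
    exact integral_congr_ae (Filter.Eventually.of_forall fun y => h1 y)
  calc ∑ i : Fin N, ∫ x in Q i, |f x - P f x| ^ p
      = ∑ i, (L i).toReal := Finset.sum_congr rfl fun i _ => hLHS i
    _ = (∑ i, L i).toReal := (ENNReal.toReal_sum fun i _ => hLt i).symm
    _ ≤ (V⁻¹ * D).toReal :=
        ENNReal.toReal_mono (ENNReal.mul_ne_top (ENNReal.inv_ne_top.2 hV0) hDt) hmain
    _ = V.toReal⁻¹ * D.toReal := by rw [ENNReal.toReal_mul, ENNReal.toReal_inv]
    _ = (volume Q0).toReal⁻¹ * ∫ y in Q2, ∫ x, |f x - f (x + y)| ^ p := by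
        rw [hRHS, hV]

end Aux

theorem averaging_operator_estimate (n N : ℕ) (p : ℝ) (hp : 1 ≤ p)
    (h : ℝ) (hh : 0 < h)
    (c : Fin N → EuclideanSpace ℝ (Fin n))
    (Q : Fin N → Set (EuclideanSpace ℝ (Fin n)))
    (hQ : ∀ i, Q i = {x | ∀ j, |x j - c i j| < h})
    (hdisj : Pairwise (Function.onFun Disjoint Q))
    (Q0 Q2 : Set (EuclideanSpace ℝ (Fin n)))
    (hQ0 : Q0 = {x | ∀ j, |x j| < h})
    (hQ2 : Q2 = {x | ∀ j, |x j| < 2 * h})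
    (P : (EuclideanSpace ℝ (Fin n) → ℝ) → (EuclideanSpace ℝ (Fin n) → ℝ))
    (hP : ∀ g x, P g x = ∑ i : Fin N,
      Set.indicator (Q i) (fun _ => (volume (Q i)).toReal⁻¹ * ∫ z in Q i, g z) x)
    (f : EuclideanSpace ℝ (Fin n) → ℝ) (hf : MemLp f (ENNReal.ofReal p) volume) :
    ∑ i : Fin N, ∫ x in Q i, |f x - P f x| ^ p ≤
      (volume Q0).toReal⁻¹ * ∫ y in Q2, ∫ x : EuclideanSpace ℝ (Fin n), |f x - f (x + y)| ^ p := by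
  set g : EuclideanSpace ℝ (Fin n) → ℝ := hf.1.mk f with hgdef
  have hgm : Measurable g := hf.1.stronglyMeasurable_mk.measurable
  have hfg : f =ᵐ[volume] g := hf.1.ae_eq_mk
  have hg : MemLp g (ENNReal.ofReal p) volume := hf.ae_eq hfg
  have hint : ∀ i, (∫ z in Q i, f z) = ∫ z in Q i, g z := fun i =>
    integral_congr_ae (ae_restrict_of_ae hfg)
  have hPfg : ∀ x, P f x = P g x := by
    intro x
    rw [hP f x, hP g x]
    refine Finset.sum_congr rfl fun i _ => ?_
    rw [hint i]
  have hLHSeq : ∀ i, (∫ x in Q i, |f x - P f x| ^ p) = ∫ x in Q i, |g x - P g x| ^ p := by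
    intro i
    refine integral_congr_ae ?_
    filter_upwards [ae_restrict_of_ae hfg] with x hx
    rw [hx, hPfg x]
  have hRHSeq : (∫ y in Q2, ∫ x, |f x - f (x + y)| ^ p)
      = ∫ y in Q2, ∫ x, |g x - g (x + y)| ^ p := by
    refine integral_congr_ae (Filter.Eventually.of_forall fun y => ?_)
    refine integral_congr_ae ?_
    have h1 : (fun x : EuclideanSpace ℝ (Fin n) => f (x + y)) =ᵐ[volume]
        fun x => g (x + y) :=
      (measurePreserving_add_right volume y).quasiMeasurePreserving.ae_eq_comp hfg
    filter_upwards [hfg, h1] with x e1 e2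
    rw [e1, e2]
  calc ∑ i : Fin N, ∫ x in Q i, |f x - P f x| ^ p
      = ∑ i : Fin N, ∫ x in Q i, |g x - P g x| ^ p :=
        Finset.sum_congr rfl fun i _ => hLHSeq i
    _ ≤ (volume Q0).toReal⁻¹ * ∫ y in Q2, ∫ x, |g x - g (x + y)| ^ p :=
        aux_estimate n N p hp h hh c Q hQ hdisj Q0 Q2 hQ0 hQ2 P hP g hg hgm
    _ = (volume Q0).toReal⁻¹ * ∫ y in Q2, ∫ x, |f x - f (x + y)| ^ p := by rw [hRHSeq]
end

section
/- Let (u_n) be a sequence of functions of bounded variation on a bounded real interval [a,b], and suppose there is a constant M with TV(u_n) ≤ M and ‖u_n‖_∞ ≤ M for all n. Then there is a subsequence of (u_n) converging pointwise everywhere on [a,b] and in L^1([a,b]) to a function of bounded variation. -/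
open MeasureTheory Filter Topology Set
open scoped ENNReal Topology


lemma seq_sel (C : ℝ) (f : ℕ → ℝ → ℝ) (T : Set ℝ) (hT : T.Countable)
    (hb : ∀ n, ∀ x ∈ T, |f n x| ≤ C) :
    ∃ φ : ℕ → ℕ, StrictMono φ ∧ ∃ g : ℝ → ℝ,
      ∀ x ∈ T, Tendsto (fun k => f (φ k) x) atTop (𝓝 (g x)) := by
  classical
  rcases T.eq_empty_or_nonempty with rfl | hne
  · exact ⟨id, strictMono_id, 0, by simp⟩
  obtain ⟨e, rfl⟩ := hT.exists_eq_range hne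
  have hmem : ∀ n i, f n (e i) ∈ Icc (-C) C := fun n i => by
    have := hb n (e i) ⟨i, rfl⟩
    exact abs_le.mp this |>.imp id id |> fun h => ⟨h.1, h.2⟩
  set F : ℕ → (ℕ → Icc (-C) C) := fun n i => ⟨f n (e i), hmem n i⟩ with hF
  obtain ⟨L, φ, hφ, hconv⟩ := SeqCompactSpace.tendsto_subseq F
  refine ⟨φ, hφ, fun x => if h : ∃ i, e i = x then (L h.choose : ℝ) else 0, ?_⟩
  rintro x ⟨i, rfl⟩
  have h : ∃ j, e j = e i := ⟨i, rfl⟩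
  show Tendsto _ atTop (𝓝 (if h : ∃ j, e j = e i then (L h.choose : ℝ) else 0))
  rw [dif_pos h]
  have h1 : Tendsto (fun k => F (φ k) h.choose) atTop (𝓝 (L h.choose)) :=
    (continuous_apply h.choose).continuousAt.tendsto.comp hconv
  have h2 := (continuous_subtype_val.tendsto _).comp h1
  simpa [F, h.choose_spec, Function.comp_def] using h2

lemma helly_mono (C : ℝ) (f : ℕ → ℝ → ℝ) (hmono : ∀ n, Monotone (f n))
    (hb : ∀ n x, |f n x| ≤ C) :
    ∃ φ : ℕ → ℕ, StrictMono φ ∧ ∃ g : ℝ → ℝ, Monotone g ∧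
      ∀ x, Tendsto (fun k => f (φ k) x) atTop (𝓝 (g x)) := by
  classical
  set T : Set ℝ := Set.range ((↑) : ℚ → ℝ) with hTdef
  obtain ⟨φ1, hφ1, g1, hg1⟩ := seq_sel C f T (Set.countable_range _)
    (fun n x _ => hb n x)
  -- basic facts
  have hg1le : ∀ d ∈ T, ∀ d' ∈ T, d ≤ d' → g1 d ≤ g1 d' := fun d hd d' hd' hdd' =>
    le_of_tendsto_of_tendsto' (hg1 d hd) (hg1 d' hd') (fun k => hmono _ hdd')
  have hg1bd : ∀ d ∈ T, |g1 d| ≤ C := by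
    intro d hd
    have h1 : g1 d ≤ C := le_of_tendsto (hg1 d hd) (Eventually.of_forall fun k => (abs_le.mp (hb _ d)).2)
    have h2 : -C ≤ g1 d := ge_of_tendsto (hg1 d hd) (Eventually.of_forall fun k => (abs_le.mp (hb _ d)).1)
    exact abs_le.mpr ⟨h2, h1⟩
  set Sl : ℝ → Set ℝ := fun x => g1 '' {y | y ∈ T ∧ y < x} with hSl
  set Sr : ℝ → Set ℝ := fun x => g1 '' {y | y ∈ T ∧ x < y} with hSr
  have hSlne : ∀ x, (Sl x).Nonempty := by
    intro x; obtain ⟨q, hq⟩ := exists_rat_lt x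
    exact ⟨g1 q, ⟨q, ⟨⟨q, rfl⟩, hq⟩, rfl⟩⟩
  have hSrne : ∀ x, (Sr x).Nonempty := by
    intro x; obtain ⟨q, hq⟩ := exists_rat_gt x
    exact ⟨g1 q, ⟨q, ⟨⟨q, rfl⟩, hq⟩, rfl⟩⟩
  have hSlbdd : ∀ x, BddAbove (Sl x) := by
    intro x; exact ⟨C, by rintro _ ⟨y, ⟨hy, _⟩, rfl⟩; exact (abs_le.mp (hg1bd y hy)).2⟩
  have hSrbdd : ∀ x, BddBelow (Sr x) := by
    intro x; exact ⟨-C, by rintro _ ⟨y, ⟨hy, _⟩, rfl⟩; exact (abs_le.mp (hg1bd y hy)).1⟩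
  set A : ℝ → ℝ := fun x => sSup (Sl x) with hA
  set B : ℝ → ℝ := fun x => sInf (Sr x) with hB
  have hABle : ∀ x, A x ≤ B x := by
    intro x
    apply csSup_le (hSlne x)
    rintro _ ⟨y, ⟨hy, hyx⟩, rfl⟩
    apply le_csInf (hSrne x)
    rintro _ ⟨z, ⟨hz, hxz⟩, rfl⟩
    exact hg1le y hy z hz (hyx.trans hxz).le
  have hBA : ∀ x y, x < y → B x ≤ A y := by
    intro x y hxy
    obtain ⟨q, hq1, hq2⟩ := exists_rat_btwn hxy
    calc B x ≤ g1 q := csInf_le (hSrbdd x) ⟨q, ⟨⟨q, rfl⟩, hq1⟩, rfl⟩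
    _ ≤ A y := le_csSup (hSlbdd y) ⟨q, ⟨⟨q, rfl⟩, hq2⟩, rfl⟩
  -- convergence at points where A x = B x
  have hconvA : ∀ x, A x = B x → Tendsto (fun k => f (φ1 k) x) atTop (𝓝 (A x)) := by
    intro x hx
    rw [tendsto_order]
    constructor
    · intro c hc
      obtain ⟨_, ⟨d, ⟨hd, hdx⟩, rfl⟩, hcd⟩ := exists_lt_of_lt_csSup (hSlne x) hc
      filter_upwards [(hg1 d hd).eventually_const_lt hcd] with k hk
      exact hk.trans_le (hmono _ hdx.le)
    · intro c hc
      rw [hx] at hc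
      obtain ⟨_, ⟨d, ⟨hd, hxd⟩, rfl⟩, hdc⟩ := exists_lt_of_csInf_lt (hSrne x) hc
      filter_upwards [(hg1 d hd).eventually_lt_const hdc] with k hk
      exact lt_of_le_of_lt (hmono _ hxd.le) hk
  -- the exceptional set is countable
  set S : Set ℝ := {x | A x ≠ B x} with hS
  have hScount : S.Countable := by
    have hlt : ∀ x ∈ S, A x < B x := fun x hx => lt_of_le_of_ne (hABle x) hx
    have hr : ∀ x : S, ∃ q : ℚ, A x < (q : ℝ) ∧ (q : ℝ) < B x := fun x =>
      exists_rat_btwn (hlt x x.2)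
    choose r hr1 hr2 using hr
    have hinj : Function.Injective r := by
      intro x y hxy
      by_contra hne
      have hne' : (x : ℝ) ≠ y := Subtype.coe_ne_coe.mpr hne
      rcases hne'.lt_or_gt with h | h
      · exact absurd (((hr2 x).trans_le (hBA x y h)).trans (hr1 y)) (by rw [hxy]; exact lt_irrefl _)
      · exact absurd (((hr2 y).trans_le (hBA y x h)).trans (hr1 x)) (by rw [hxy]; exact lt_irrefl _)
    exact Set.countable_coe_iff.mp hinj.countable
  obtain ⟨φ2, hφ2, g2, hg2⟩ := seq_sel C (fun k => f (φ1 k)) S hScount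
    (fun n x _ => hb _ x)
  refine ⟨φ1 ∘ φ2, hφ1.comp hφ2, fun x => if x ∈ S then g2 x else A x, ?_, ?_⟩
  · -- monotone, via limits
    have hconv : ∀ x, Tendsto (fun k => f (φ1 (φ2 k)) x) atTop
        (𝓝 (if x ∈ S then g2 x else A x)) := by
      intro x
      by_cases hx : x ∈ S
      · simpa [hx] using hg2 x hx
      · simp only [hx, if_false]
        have : A x = B x := not_not.mp (fun h => hx h)
        exact (hconvA x this).comp hφ2.tendsto_atTop
    intro x y hxy
    exact le_of_tendsto_of_tendsto' (hconv x) (hconv y) (fun k => hmono _ hxy)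
  · intro x
    by_cases hx : x ∈ S
    · simpa [hx] using hg2 x hx
    · simp only [hx, if_false]
      have : A x = B x := not_not.mp (fun h => hx h)
      exact (hconvA x this).comp hφ2.tendsto_atTop

theorem helly_selection (a b : ℝ) (hab : a < b) (u : ℕ → ℝ → ℝ) (M : ℝ)
    (hTV : ∀ n, eVariationOn (u n) (Set.Icc a b) ≤ ENNReal.ofReal M)
    (hbdd : ∀ n, ∀ x ∈ Set.Icc a b, |u n x| ≤ M) :
    ∃ φ : ℕ → ℕ, StrictMono φ ∧ ∃ v : ℝ → ℝ,
      eVariationOn v (Set.Icc a b) ≠ ∞ ∧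
      (∀ x ∈ Set.Icc a b, Tendsto (fun k => u (φ k) x) atTop (𝓝 (v x))) ∧
      Tendsto (fun k => ∫ x in Set.Icc a b, |u (φ k) x - v x|) atTop (𝓝 0) := by
  have hM0 : 0 ≤ M := (abs_nonneg _).trans (hbdd 0 a ⟨le_rfl, hab.le⟩)
  have hLBV : ∀ n, LocallyBoundedVariationOn (u n) (Icc a b) := fun n =>
    BoundedVariationOn.locallyBoundedVariationOn ((hTV n).trans_lt ENNReal.ofReal_lt_top).ne
  have haI : a ∈ Icc a b := ⟨le_rfl, hab.le⟩
  -- clamp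
  set c : ℝ → ℝ := fun x => max a (min b x) with hc
  have hcmono : Monotone c := fun x y hxy =>
    max_le_max le_rfl (min_le_min le_rfl hxy)
  have hcmem : ∀ x, c x ∈ Icc a b :=
    fun x => ⟨le_max_left _ _, max_le hab.le (min_le_left _ _)⟩
  have hceq : ∀ x ∈ Icc a b, c x = x := fun x hx => by
    simp only [hc, min_eq_right hx.2, max_eq_right hx.1]
  -- monotone decomposition, globalized
  set P : ℕ → ℝ → ℝ := fun n x => variationOnFromTo (u n) (Icc a b) a (c x) with hP
  set Q : ℕ → ℝ → ℝ := fun n x => P n x - u n (c x) with hQ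
  have hPmono : ∀ n, Monotone (P n) := fun n x y hxy =>
    variationOnFromTo.monotoneOn (hLBV n) haI (hcmem x) (hcmem y) (hcmono hxy)
  have hQmono : ∀ n, Monotone (Q n) := fun n x y hxy =>
    variationOnFromTo.sub_self_monotoneOn (hLBV n) haI (hcmem x) (hcmem y) (hcmono hxy)
  have hPbd : ∀ n x, |P n x| ≤ M := by
    intro n x
    have h0 : 0 ≤ P n x := variationOnFromTo.nonneg_of_le _ _ (hcmem x).1
    rw [abs_of_nonneg h0]
    rw [hP]
    simp only
    rw [variationOnFromTo.eq_of_le _ _ (hcmem x).1]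
    exact ENNReal.toReal_le_of_le_ofReal hM0
      ((eVariationOn.mono _ inter_subset_left).trans (hTV n))
  have hQbd : ∀ n x, |Q n x| ≤ M + M := fun n x =>
    (abs_sub _ _).trans (add_le_add (hPbd n x) (hbdd n _ (hcmem x)))
  obtain ⟨φ1, hφ1, gP, hgPmono, hgP⟩ := helly_mono M P hPmono hPbd
  obtain ⟨φ2, hφ2, gQ, hgQmono, hgQ⟩ :=
    helly_mono (M + M) (fun k => Q (φ1 k)) (fun k => hQmono _) (fun k => hQbd _)
  set φ : ℕ → ℕ := φ1 ∘ φ2 with hφdef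
  set v : ℝ → ℝ := fun x => gP x - gQ x with hv
  have hconv : ∀ x ∈ Icc a b, Tendsto (fun k => u (φ k) x) atTop (𝓝 (v x)) := by
    intro x hx
    have h1 : Tendsto (fun k => P (φ k) x) atTop (𝓝 (gP x)) :=
      (hgP x).comp hφ2.tendsto_atTop
    have h2 := (h1.sub (hgQ x))
    exact h2.congr fun k => by
      show P (φ k) x - Q (φ k) x = u (φ k) x
      rw [hQ]; simp [hceq x hx]
  refine ⟨φ, hφ1.comp hφ2, v, ?_, hconv, ?_⟩
  · -- bounded variation of v by lower semicontinuity
    have : eVariationOn v (Icc a b) ≤ ENNReal.ofReal M := by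
      apply iSup_le
      rintro ⟨n, ⟨w, hw, ws⟩⟩
      have htend : Tendsto
          (fun k => ∑ i ∈ Finset.range n, edist (u (φ k) (w (i+1))) (u (φ k) (w i)))
          atTop (𝓝 (∑ i ∈ Finset.range n, edist (v (w (i+1))) (v (w i)))) := by
        apply tendsto_finset_sum
        intro i _
        exact (hconv (w (i+1)) (ws (i+1))).edist (hconv (w i) (ws i))
      exact le_of_tendsto htend (Eventually.of_forall fun k =>
        (eVariationOn.sum_le hw ws).trans (hTV (φ k)))
    exact (this.trans_lt ENNReal.ofReal_lt_top).ne
  · -- L¹ convergence by dominated convergence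
    have hμ : IsFiniteMeasure (volume.restrict (Icc a b)) :=
      ⟨by rw [Measure.restrict_apply_univ]; exact measure_Icc_lt_top⟩
    have hvbd : ∀ x ∈ Icc a b, |v x| ≤ M + M := by
      intro x hx
      refine le_of_tendsto ((hconv x hx).abs) (Eventually.of_forall fun k =>
        (hbdd _ x hx).trans (by linarith))
    have humeas : ∀ n, AEStronglyMeasurable (u n) (volume.restrict (Icc a b)) := by
      intro n
      refine (((hPmono n).measurable.sub (hQmono n).measurable).aestronglyMeasurable).congr ?_
      filter_upwards [ae_restrict_mem measurableSet_Icc] with x hx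
      rw [hQ]; simp [hceq x hx]
    have hvmeas : AEStronglyMeasurable v (volume.restrict (Icc a b)) :=
      (hgPmono.measurable.sub hgQmono.measurable).aestronglyMeasurable
    have := MeasureTheory.tendsto_integral_of_dominated_convergence
      (μ := volume.restrict (Icc a b))
      (F := fun k x => |u (φ k) x - v x|) (f := fun _ => (0:ℝ))
      (fun _ => M + M + (M + M))
      (fun k => (continuous_abs.comp_aestronglyMeasurable ((humeas (φ k)).sub hvmeas)))
      (integrable_const _)
      (by
        intro k
        filter_upwards [ae_restrict_mem measurableSet_Icc] with x hx
        rw [Real.norm_eq_abs, abs_abs]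
        exact (abs_sub _ _).trans (add_le_add ((hbdd _ x hx).trans (by linarith)) (hvbd x hx)))
      (by
        filter_upwards [ae_restrict_mem measurableSet_Icc] with x hx
        have := ((hconv x hx).sub
          (tendsto_const_nhds : Tendsto (fun _ : ℕ => v x) atTop (𝓝 (v x)))).abs
        simpa using this)
    simpa using this
end
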